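/- Let r, r', and M be positive real numbers with r' > r, and set μ_k := M·exp{−k·ln(r'/r)} = M·(r/r')^k for all k ∈ ℕ. Let ι map each f ∈ 𝒜(r'; M), with Taylor series f(z) = Σ_{k≥0} a_k z^k on D(0; r'), to the sequence {a_k·r^k}_{k∈ℕ}. Then ℰ_1({μ_k}_{k∈ℕ}) ⊆ ι(𝒜(r'; M)) ⊆ ℰ_2({μ_k}_{k∈ℕ}), i.e., every sequence {ã_k} with Σ_{k≥0} |ã_k|/μ_k ≤ 1 equals ι(f) for some f ∈ 𝒜(r'; M), and for every f ∈ 𝒜(r'; M) the sequence ι(f) = {ã_k} satisfies Σ_{k≥0} |ã_k/μ_k|² ≤ 1. -/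

import Mathlib

open scoped BigOperators

/-- The class `𝒜(r'; M)` of functions analytic on the open disk `D(0;r')` and bounded by `M`. -/
def diskClass (r' M : ℝ) : Set (ℂ → ℂ) :=
  {f | DifferentiableOn ℂ f (Metric.ball (0 : ℂ) r') ∧
    ∀ z ∈ Metric.ball (0 : ℂ) r', ‖f z‖ ≤ M}

open MeasureTheory Complex Set Filter
open scoped ENNReal NNReal

namespace Stmt10Aux

/-- `exp(-(k log(r'/r))) = (r/r')^k`. -/
lemma exp_neg_eq (r r' : ℝ) (hr : 0 < r) (hrr' : r < r') (k : ℕ) :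
    Real.exp (-(k * Real.log (r' / r))) = (r / r') ^ k := by
  have h1 : (0:ℝ) < r / r' := div_pos hr (hr.trans hrr')
  have h2 : Real.log (r / r') = - Real.log (r' / r) := by
    rw [← Real.log_inv]
    congr 1
    field_simp
  rw [← Real.exp_log h1, ← Real.exp_nat_mul]
  congr 1
  rw [h2]
  ring

lemma fourier_nat_pow (k : ℕ) (x : AddCircle (1:ℝ)) :
    (fourier (k : ℤ) x : ℂ) = (AddCircle.toCircle x : ℂ) ^ k := by
  induction k with
  | zero => simpa using fourier_zero
  | succ n ih =>
      have : ((n + 1 : ℕ) : ℤ) = (n : ℤ) + 1 := by push_cast; ring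
      rw [this, fourier_add, ih, fourier_one, pow_succ]

/-- Key Parseval/Bessel bound: partial sums of `(‖c k‖ ρ^k)^2` are bounded by `M^2`. -/
lemma partial_bound (r' M : ℝ) (hM : 0 < M) {f : ℂ → ℂ}
    (hd : DifferentiableOn ℂ f (Metric.ball (0:ℂ) r'))
    (hb : ∀ z ∈ Metric.ball (0:ℂ) r', ‖f z‖ ≤ M)
    {c : ℕ → ℂ} (hc : ∀ z ∈ Metric.ball (0:ℂ) r', HasSum (fun k : ℕ => c k * z ^ k) (f z))
    {ρ : ℝ} (hρ0 : 0 ≤ ρ) (hρ : ρ < r') (s : Finset ℕ) :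
    ∑ k ∈ s, (‖c k‖ * ρ ^ k) ^ 2 ≤ M ^ 2 := by
  haveI : Fact (0 < (1:ℝ)) := ⟨one_pos⟩
  have hr' : 0 < r' := lt_of_le_of_lt hρ0 hρ
  -- summability of `‖c k‖ ρ^k`
  set σ : ℝ := (ρ + r') / 2 with hσdef
  have hρσ : ρ ≤ σ := by rw [hσdef]; linarith
  have hσ0 : 0 ≤ σ := le_trans hρ0 hρσ
  have hσr' : σ < r' := by rw [hσdef]; linarith
  have hσmem : (σ : ℂ) ∈ Metric.ball (0:ℂ) r' := by
    simp only [Metric.mem_ball, dist_zero_right, Complex.norm_real, Real.norm_eq_abs]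
    rwa [_root_.abs_of_nonneg hσ0]
  have hsummσ : Summable fun k : ℕ => ‖c k‖ * σ ^ k := by
    have h1 : Summable fun k : ℕ => ‖c k * (σ:ℂ) ^ k‖ :=
      summable_norm_iff.mpr (hc _ hσmem).summable
    have : (fun k : ℕ => ‖c k * (σ:ℂ) ^ k‖) = fun k : ℕ => ‖c k‖ * σ ^ k := by
      funext k
      rw [norm_mul, norm_pow, Complex.norm_real, Real.norm_eq_abs, _root_.abs_of_nonneg hσ0]
    rwa [this] at h1
  have hsummρ : Summable fun k : ℕ => ‖c k‖ * ρ ^ k := by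
    refine hsummσ.of_nonneg_of_le (fun k => by positivity) fun k => ?_
    exact mul_le_mul_of_nonneg_left (pow_le_pow_left₀ hρ0 hρσ k) (norm_nonneg _)
  -- the continuous function on the circle
  have hmem : ∀ x : AddCircle (1:ℝ), (ρ : ℂ) * (AddCircle.toCircle x : ℂ) ∈ Metric.ball (0:ℂ) r' := by
    intro x
    simp only [Metric.mem_ball, dist_zero_right, norm_mul, Complex.norm_real, Real.norm_eq_abs,
      _root_.abs_of_nonneg hρ0]
    calc ρ * ‖(AddCircle.toCircle x : ℂ)‖ = ρ := by
          rw [Circle.norm_coe, mul_one]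
      _ < r' := hρ
  have hcont : Continuous fun x : AddCircle (1:ℝ) => f ((ρ : ℂ) * (AddCircle.toCircle x : ℂ)) := by
    apply hd.continuousOn.comp_continuous
    · exact continuous_const.mul (continuous_induced_dom.comp AddCircle.continuous_toCircle)
    · exact hmem
  set g : C(AddCircle (1:ℝ), ℂ) := ⟨_, hcont⟩ with hgdef
  -- pointwise Fourier expansion of g
  have hgx : ∀ x : AddCircle (1:ℝ),
      HasSum (fun k : ℕ => (c k * (ρ:ℂ) ^ k) • fourier (k : ℤ) x) (g x) := by
    intro x
    have h1 := hc _ (hmem x)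
    have : (fun k : ℕ => c k * ((ρ:ℂ) * (AddCircle.toCircle x : ℂ)) ^ k) =
        fun k : ℕ => (c k * (ρ:ℂ) ^ k) • fourier (k : ℤ) x := by
      funext k
      rw [smul_eq_mul, fourier_nat_pow, mul_pow]
      ring
    rwa [this] at h1
  -- summability of the Fourier series in C(AddCircle, ℂ)
  set F : ℕ → C(AddCircle (1:ℝ), ℂ) := fun k => (c k * (ρ:ℂ) ^ k) • fourier (k : ℤ) with hFdef
  have hFnorm : ∀ k : ℕ, ‖F k‖ = ‖c k‖ * ρ ^ k := by
    intro k
    rw [hFdef]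
    simp only [norm_smul, fourier_norm, mul_one, norm_mul, norm_pow, Complex.norm_real,
      Real.norm_eq_abs, _root_.abs_of_nonneg hρ0]
  have hFs : Summable F := by
    apply Summable.of_norm
    simpa only [hFnorm] using hsummρ
  have hFg : HasSum F g := by
    have hG : HasSum F (∑' k : ℕ, F k) := hFs.hasSum
    set G : C(AddCircle (1:ℝ), ℂ) := ∑' k : ℕ, F k with hGdef
    have hGg : G = g := by
      ext x
      have h1 : HasSum (fun k : ℕ => F k x) (G x) := hG.mapL (ContinuousMap.evalCLM ℂ x)
      have h2 : HasSum (fun k : ℕ => F k x) (g x) := hgx x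
      exact h1.unique h2
    exact hGg ▸ hG
  -- pass to L²
  set μ : Measure (AddCircle (1:ℝ)) := AddCircle.haarAddCircle with hμdef
  set G2 : Lp ℂ 2 μ := ContinuousMap.toLp 2 μ ℂ g with hG2def
  have hL2 : HasSum (fun k : ℕ => (c k * (ρ:ℂ) ^ k) • fourierLp 2 (k : ℤ)) G2 := by
    have h1 := hFg.mapL (ContinuousMap.toLp (E := ℂ) 2 μ ℂ)
    have : (fun k : ℕ => ContinuousMap.toLp (E := ℂ) 2 μ ℂ (F k)) =
        fun k : ℕ => (c k * (ρ:ℂ) ^ k) • fourierLp 2 (k : ℤ) := by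
      funext k
      rw [hFdef]
      simp only [_root_.map_smul]
      rfl
    rwa [this] at h1
  have horth : Orthonormal ℂ (fourierLp (T := (1:ℝ)) 2) := orthonormal_fourier
  -- inner products
  have hinner : ∀ n : ℕ, (inner ℂ (fourierLp (T := (1:ℝ)) 2 (n : ℤ)) G2 : ℂ) = c n * (ρ:ℂ) ^ n := by
    intro n
    have h1 := hL2.mapL (innerSL ℂ (fourierLp (T := (1:ℝ)) 2 (n : ℤ)))
    have h2 : (fun k : ℕ => innerSL ℂ (fourierLp (T := (1:ℝ)) 2 (n : ℤ))
        ((c k * (ρ:ℂ) ^ k) • fourierLp 2 (k : ℤ))) =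
        fun k : ℕ => if k = n then c n * (ρ:ℂ) ^ n else 0 := by
      funext k
      rw [innerSL_apply_apply, inner_smul_right, orthonormal_iff_ite.mp horth]
      by_cases h : k = n
      · subst h; simp
      · have : ((n : ℤ) = (k : ℤ)) = False := by
          simp [Int.natCast_inj, Ne.symm h]
        simp [this, h]
    rw [h2] at h1
    have h3 : HasSum (fun k : ℕ => if k = n then c n * (ρ:ℂ) ^ n else 0) (c n * (ρ:ℂ) ^ n) :=
      hasSum_ite_eq n _
    exact (h1.unique h3).symm ▸ (h3.unique h1)
  -- norm bound on G2
  have hgnorm : ‖g‖ ≤ M := by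
    rw [ContinuousMap.norm_le _ hM.le]
    intro x
    exact hb _ (hmem x)
  have hμuniv : measureUnivNNReal μ = 1 := by
    simp [measureUnivNNReal, measure_univ]
  have hG2norm : ‖G2‖ ≤ M := by
    calc ‖G2‖ ≤ ‖(ContinuousMap.toLp (E := ℂ) 2 μ ℂ)‖ * ‖g‖ :=
          (ContinuousMap.toLp (E := ℂ) 2 μ ℂ).le_opNorm g
      _ ≤ 1 * M := by
          apply mul_le_mul _ hgnorm (norm_nonneg _) zero_le_one
          calc ‖(ContinuousMap.toLp (E := ℂ) 2 μ ℂ)‖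
              ≤ (measureUnivNNReal μ : ℝ) ^ (2:ℝ≥0∞).toReal⁻¹ := by
                exact_mod_cast ContinuousMap.toLp_norm_le μ
            _ = 1 := by rw [hμuniv]; simp
      _ = M := one_mul M
  -- Bessel
  have hbes : ∑' i : ℤ, ‖(inner ℂ (fourierLp (T := (1:ℝ)) 2 i) G2 : ℂ)‖ ^ 2 ≤ ‖G2‖ ^ 2 :=
    horth.tsum_inner_products_le G2
  have hbsumm : Summable fun i : ℤ => ‖(inner ℂ (fourierLp (T := (1:ℝ)) 2 i) G2 : ℂ)‖ ^ 2 :=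
    horth.inner_products_summable G2
  -- conclude
  set e : ℕ ↪ ℤ := ⟨Nat.cast, Nat.cast_injective⟩ with hedef
  have key : ∑ k ∈ s, (‖c k‖ * ρ ^ k) ^ 2 =
      ∑ i ∈ s.map e, ‖(inner ℂ (fourierLp (T := (1:ℝ)) 2 i) G2 : ℂ)‖ ^ 2 := by
    rw [Finset.sum_map]
    apply Finset.sum_congr rfl
    intro k _
    rw [hedef]
    simp only [Function.Embedding.coeFn_mk]
    rw [hinner k]
    rw [norm_mul, norm_pow, Complex.norm_real, Real.norm_eq_abs, _root_.abs_of_nonneg hρ0]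
  rw [key]
  calc ∑ i ∈ s.map e, ‖(inner ℂ (fourierLp (T := (1:ℝ)) 2 i) G2 : ℂ)‖ ^ 2
      ≤ ∑' i : ℤ, ‖(inner ℂ (fourierLp (T := (1:ℝ)) 2 i) G2 : ℂ)‖ ^ 2 :=
        Summable.sum_le_tsum _ (fun i _ => sq_nonneg _) hbsumm
    _ ≤ ‖G2‖ ^ 2 := hbes
    _ ≤ M ^ 2 := pow_le_pow_left₀ (norm_nonneg _) hG2norm 2

end Stmt10Aux

/-- **Lemma (ellipsoidal structure of `ι(𝒜(r';M))`).** With semi-axes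
`μ_k = M·exp(-k·ln(r'/r)) = M·(r/r')^k` and `ι(f) = {a_k·r^k}_k` (where `{a_k}` are the
Taylor coefficients of `f`), we have `ℰ₁({μ_k}) ⊆ ι(𝒜(r';M)) ⊆ ℰ₂({μ_k})`. -/
theorem stmt10 (r r' M : ℝ) (hr : 0 < r) (hrr' : r < r') (hM : 0 < M) :
    (∀ a : ℕ → ℂ,
      Summable (fun k : ℕ => ‖a k‖ / (M * Real.exp (-(k * Real.log (r' / r))))) →
      (∑' k : ℕ, ‖a k‖ / (M * Real.exp (-(k * Real.log (r' / r))))) ≤ 1 →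
      ∃ f ∈ diskClass r' M, ∃ c : ℕ → ℂ,
        (∀ z ∈ Metric.ball (0 : ℂ) r', HasSum (fun k : ℕ => c k * z ^ k) (f z)) ∧
        ∀ k : ℕ, a k = c k * (r : ℂ) ^ k) ∧
    (∀ f ∈ diskClass r' M, ∀ c : ℕ → ℂ,
      (∀ z ∈ Metric.ball (0 : ℂ) r', HasSum (fun k : ℕ => c k * z ^ k) (f z)) →
      Summable (fun k : ℕ =>
        (‖c k * (r : ℂ) ^ k‖ / (M * Real.exp (-(k * Real.log (r' / r))))) ^ 2) ∧
      (∑' k : ℕ,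
        (‖c k * (r : ℂ) ^ k‖ / (M * Real.exp (-(k * Real.log (r' / r))))) ^ 2) ≤ 1) := by
  have hr' : 0 < r' := hr.trans hrr'
  have hrr0 : (0:ℝ) < r / r' := div_pos hr hr'
  -- simplification of the weights
  have hweight : ∀ (k : ℕ) (v : ℝ), v / (M * Real.exp (-(k * Real.log (r' / r)))) =
      v * r' ^ k / (M * r ^ k) := by
    intro k v
    rw [Stmt10Aux.exp_neg_eq r r' hr hrr' k, div_pow]
    have h1 : (r:ℝ) ^ k ≠ 0 := pow_ne_zero _ hr.ne'
    have h2 : (r':ℝ) ^ k ≠ 0 := pow_ne_zero _ hr'.ne'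
    field_simp
  constructor
  · -- Part 1: ℓ¹ ball included in the image
    intro a ha hasum
    set t : ℕ → ℝ := fun k => ‖a k‖ / (M * Real.exp (-(k * Real.log (r' / r)))) with htdef
    have ht0 : ∀ k, 0 ≤ t k := fun k => by
      apply div_nonneg (norm_nonneg _)
      positivity
    set c : ℕ → ℂ := fun k => a k / (r:ℂ) ^ k with hcdef
    have hrC : ((r:ℂ)) ≠ 0 := Complex.ofReal_ne_zero.mpr hr.ne'
    have hrCk : ∀ k : ℕ, ((r:ℂ)) ^ k ≠ 0 := fun k => pow_ne_zero _ hrC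
    have hack : ∀ k, a k = c k * (r:ℂ) ^ k := by
      intro k
      rw [hcdef]
      field_simp
    have hkey : ∀ k : ℕ, ‖c k‖ * r' ^ k = M * t k := by
      intro k
      simp only [htdef]
      rw [hweight k]
      rw [hcdef]
      rw [norm_div, norm_pow, Complex.norm_real, Real.norm_eq_abs, _root_.abs_of_nonneg hr.le]
      field_simp
    have hsum_norm : Summable fun k : ℕ => ‖c k‖ * r' ^ k := by
      have := ha.mul_left M
      rw [htdef] at hkey
      exact this.congr (fun k => (hkey k).symm)
    -- define the power series and its sum
    set p : FormalMultilinearSeries ℂ ℂ ℂ := FormalMultilinearSeries.ofScalars ℂ c with hpdef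
    have hpnorm : ∀ n : ℕ, ‖p n‖ = ‖c n‖ := fun n =>
      FormalMultilinearSeries.ofScalars_norm ℂ c n
    have hradius : ENNReal.ofReal r' ≤ p.radius := by
      have h1 : Summable fun n : ℕ => ‖p n‖ * ((r'.toNNReal : ℝ)) ^ n := by
        have : ((r'.toNNReal : ℝ)) = r' := Real.coe_toNNReal _ hr'.le
        rw [this]
        simpa only [hpnorm] using hsum_norm
      have h2 := p.le_radius_of_summable h1
      rw [ENNReal.ofReal]
      exact h2
    set f : ℂ → ℂ := fun z => ∑' k : ℕ, c k * z ^ k with hfdef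
    have hsz : ∀ z ∈ Metric.ball (0:ℂ) r', Summable fun k : ℕ => ‖c k * z ^ k‖ := by
      intro z hz
      rw [Metric.mem_ball, dist_zero_right] at hz
      refine hsum_norm.of_nonneg_of_le (fun k => norm_nonneg _) fun k => ?_
      rw [norm_mul, norm_pow]
      exact mul_le_mul_of_nonneg_left (pow_le_pow_left₀ (norm_nonneg z) hz.le k) (norm_nonneg _)
    have hhs : ∀ z ∈ Metric.ball (0:ℂ) r', HasSum (fun k : ℕ => c k * z ^ k) (f z) := by
      intro z hz
      exact (summable_norm_iff.mp (hsz z hz)).hasSum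
    have hnorm : ∀ z ∈ Metric.ball (0:ℂ) r', ‖f z‖ ≤ M := by
      intro z hz
      rw [Metric.mem_ball, dist_zero_right] at hz
      have h1 : ‖f z‖ ≤ ∑' k : ℕ, ‖c k * z ^ k‖ := norm_tsum_le_tsum_norm (hsz z (by
        rw [Metric.mem_ball, dist_zero_right]; exact hz))
      have h2 : ∑' k : ℕ, ‖c k * z ^ k‖ ≤ ∑' k : ℕ, ‖c k‖ * r' ^ k := by
        apply Summable.tsum_le_tsum _ (hsz z (by rw [Metric.mem_ball, dist_zero_right]; exact hz)) hsum_norm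
        intro k
        rw [norm_mul, norm_pow]
        exact mul_le_mul_of_nonneg_left (pow_le_pow_left₀ (norm_nonneg z) hz.le k) (norm_nonneg _)
      have h3 : ∑' k : ℕ, ‖c k‖ * r' ^ k = M * ∑' k : ℕ, t k := by
        rw [← tsum_mul_left]
        exact tsum_congr hkey
      calc ‖f z‖ ≤ ∑' k : ℕ, ‖c k * z ^ k‖ := h1
        _ ≤ ∑' k : ℕ, ‖c k‖ * r' ^ k := h2
        _ = M * ∑' k : ℕ, t k := h3
        _ ≤ M * 1 := mul_le_mul_of_nonneg_left hasum hM.le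
        _ = M := mul_one M
    have hfp : HasFPowerSeriesOnBall f p 0 (ENNReal.ofReal r') := by
      refine ⟨hradius, by simp [ENNReal.ofReal_pos, hr'], ?_⟩
      intro y hy
      rw [Metric.emetric_ball] at hy
      rw [zero_add]
      have h1 := hhs y hy
      have : (fun n : ℕ => p n fun _ => y) = fun n : ℕ => c n * y ^ n := by
        funext n
        rw [hpdef, FormalMultilinearSeries.ofScalars_apply_eq, smul_eq_mul]
      rwa [this]
    have hdiff : DifferentiableOn ℂ f (Metric.ball (0:ℂ) r') := by
      intro z hz
      have hz' : z ∈ Metric.eball (0:ℂ) (ENNReal.ofReal r') := by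
        rwa [Metric.emetric_ball]
      exact (hfp.analyticOnNhd z hz').differentiableWithinAt
    exact ⟨f, ⟨hdiff, hnorm⟩, c, hhs, hack⟩
  · -- Part 2: image included in the ℓ² ellipsoid
    intro f hf c hc
    obtain ⟨hd, hb⟩ := hf
    -- rewrite the terms
    have hterm : ∀ k : ℕ, (‖c k * (r : ℂ) ^ k‖ / (M * Real.exp (-(k * Real.log (r' / r))))) ^ 2
        = (‖c k‖ * r' ^ k) ^ 2 / M ^ 2 := by
      intro k
      rw [hweight]
      rw [norm_mul, norm_pow, Complex.norm_real, Real.norm_eq_abs, _root_.abs_of_nonneg hr.le]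
      have hrk : (r:ℝ) ^ k ≠ 0 := pow_ne_zero _ hr.ne'
      have h1 : ‖c k‖ * r ^ k * r' ^ k / (M * r ^ k) = ‖c k‖ * r' ^ k / M := by
        field_simp
      rw [h1, div_pow]
    have hpartial : ∀ s : Finset ℕ, ∑ k ∈ s, (‖c k‖ * r' ^ k) ^ 2 ≤ M ^ 2 := by
      intro s
      have hcont : Continuous fun ρ : ℝ => ∑ k ∈ s, (‖c k‖ * ρ ^ k) ^ 2 := by
        apply continuous_finset_sum
        intro k _
        fun_prop
      have htend : Tendsto (fun ρ : ℝ => ∑ k ∈ s, (‖c k‖ * ρ ^ k) ^ 2)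
          (nhdsWithin r' (Set.Iio r')) (nhds (∑ k ∈ s, (‖c k‖ * r' ^ k) ^ 2)) :=
        (hcont.tendsto r').mono_left nhdsWithin_le_nhds
      refine le_of_tendsto htend ?_
      filter_upwards [Ioo_mem_nhdsLT_of_mem
        (show r' ∈ Set.Ioc (0:ℝ) r' from ⟨hr', le_rfl⟩)] with ρ hρ
      exact Stmt10Aux.partial_bound r' M hM hd hb hc hρ.1.le hρ.2 s
    have hsumm : Summable fun k : ℕ => (‖c k‖ * r' ^ k) ^ 2 :=
      summable_of_sum_le (fun k => sq_nonneg _) hpartial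
    have htsum : (∑' k : ℕ, (‖c k‖ * r' ^ k) ^ 2) ≤ M ^ 2 :=
      Summable.tsum_le_of_sum_le hsumm hpartial
    constructor
    · simp only [hterm]
      exact hsumm.div_const _
    · have h1 : (∑' k : ℕ, (‖c k * (r : ℂ) ^ k‖ /
          (M * Real.exp (-(k * Real.log (r' / r))))) ^ 2)
          = ∑' k : ℕ, (‖c k‖ * r' ^ k) ^ 2 / M ^ 2 := tsum_congr hterm
      rw [h1, tsum_div_const]
      rw [div_le_one (by positivity)]
      exact htsum
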